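/- For all real numbers h > 0, R_c > 0 and N with 0 < N < 1, one has Φ(h,N,R_c) > (1 − N²)/12; in particular Φ(h,N,R_c) > 0, where Φ(h,N,R_c) = 1/12 + R_c/(4h²(1−N²)) − (1/(4h))·√(N²R_c/(1−N²))·coth(N h √((1−N²)/R_c)). -/

import Mathlib

/-- `coth x = cosh x / sinh x`. -/
noncomputable def cothR (x : ℝ) : ℝ := Real.cosh x / Real.sinh x

/-- The coefficient function `Φ(h,N,R_c)` of the micropolar Reynolds equation. -/
noncomputable def Phi (h N Rc : ℝ) : ℝ :=
  1 / 12 + Rc / (4 * h ^ 2 * (1 - N ^ 2)) -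
    (1 / (4 * h)) * Real.sqrt (N ^ 2 * Rc / (1 - N ^ 2)) *
      cothR (N * h * Real.sqrt ((1 - N ^ 2) / Rc))

lemma sinh_lt_mul_cosh {x : ℝ} (hx : 0 < x) : Real.sinh x < x * Real.cosh x := by
  have key : StrictMonoOn (fun y : ℝ => y * Real.cosh y - Real.sinh y) (Set.Ici 0) := by
    apply strictMonoOn_of_deriv_pos (convex_Ici 0)
    · fun_prop
    · intro y hy
      rw [interior_Ici, Set.mem_Ioi] at hy
      have h1 : HasDerivAt (fun y : ℝ => y * Real.cosh y - Real.sinh y)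
          (1 * Real.cosh y + y * Real.sinh y - Real.cosh y) y :=
        ((hasDerivAt_id y).mul (Real.hasDerivAt_cosh y)).sub (Real.hasDerivAt_sinh y)
      rw [h1.deriv]
      have hs : 0 < Real.sinh y := Real.sinh_pos_iff.2 hy
      nlinarith
  have := key Set.self_mem_Ici (Set.mem_Ici.2 hx.le) hx
  simpa using this

lemma mul_cosh_lt {x : ℝ} (hx : 0 < x) :
    x * Real.cosh x < (1 + x ^ 2 / 3) * Real.sinh x := by
  have key : StrictMonoOn
      (fun y : ℝ => (1 + y ^ 2 / 3) * Real.sinh y - y * Real.cosh y) (Set.Ici 0) := by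
    apply strictMonoOn_of_deriv_pos (convex_Ici 0)
    · fun_prop
    · intro y hy
      rw [interior_Ici, Set.mem_Ioi] at hy
      have h1 : HasDerivAt (fun y : ℝ => (1 + y ^ 2 / 3) * Real.sinh y - y * Real.cosh y)
          ((0 + 2 * y ^ 1 * 1 / 3) * Real.sinh y + (1 + y ^ 2 / 3) * Real.cosh y -
            (1 * Real.cosh y + y * Real.sinh y)) y := by
        exact (((hasDerivAt_const y (1:ℝ)).add
          (((hasDerivAt_id y).pow 2).div_const 3)).mul (Real.hasDerivAt_sinh y)).sub
          ((hasDerivAt_id y).mul (Real.hasDerivAt_cosh y))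
      rw [h1.deriv]
      have h2 := sinh_lt_mul_cosh hy
      nlinarith
  have := key Set.self_mem_Ici (Set.mem_Ici.2 hx.le) hx
  simpa using this

/-- Strict positivity of the Reynolds coefficient:
`Φ(h,N,R_c) > (1 − N²)/12 > 0` for `h, R_c > 0` and `0 < N < 1`. -/
theorem Phi_pos (h Rc N : ℝ) (hh : 0 < h) (hRc : 0 < Rc)
    (hN0 : 0 < N) (hN1 : N < 1) :
    (1 - N ^ 2) / 12 < Phi h N Rc ∧ 0 < Phi h N Rc := by
  have hN2 : 0 < 1 - N ^ 2 := by nlinarith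
  set s : ℝ := Real.sqrt ((1 - N ^ 2) / Rc) with hs_def
  have hs_pos : 0 < s := Real.sqrt_pos.2 (by positivity)
  have hs_sq : s ^ 2 = (1 - N ^ 2) / Rc := Real.sq_sqrt (by positivity)
  set a : ℝ := N * h * s with ha_def
  have ha_pos : 0 < a := by positivity
  have hsqrt2 : Real.sqrt (N ^ 2 * Rc / (1 - N ^ 2)) = N / s := by
    rw [show N ^ 2 * Rc / (1 - N ^ 2) = (N / s) ^ 2 by
      rw [div_pow, hs_sq]; field_simp]
    exact Real.sqrt_sq (by positivity)
  have hsinh : 0 < Real.sinh a := Real.sinh_pos_iff.2 ha_pos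
  have key := mul_cosh_lt ha_pos
  -- Phi rewritten
  have hPhi : Phi h N Rc = 1 / 12 + N ^ 2 / (4 * a ^ 2) -
      (N ^ 2 / (4 * a)) * (Real.cosh a / Real.sinh a) := by
    rw [Phi, hsqrt2, cothR]
    have h1 : Rc / (4 * h ^ 2 * (1 - N ^ 2)) = N ^ 2 / (4 * a ^ 2) := by
      rw [ha_def]
      have hrs : Rc * s ^ 2 = 1 - N ^ 2 := by
        rw [hs_sq]; field_simp
      field_simp
      linear_combination hrs
    have h2 : 1 / (4 * h) * (N / s) = N ^ 2 / (4 * a) := by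
      rw [ha_def]; field_simp
    rw [h1, ← hs_def, h2]
  have main : (1 - N ^ 2) / 12 < Phi h N Rc := by
    rw [hPhi]
    have hcoth : Real.cosh a / Real.sinh a < (1 + a ^ 2 / 3) / a := by
      rw [div_lt_div_iff₀ hsinh ha_pos]
      nlinarith
    have h3 : N ^ 2 / (4 * a) * (Real.cosh a / Real.sinh a)
        < N ^ 2 / (4 * a ^ 2) + N ^ 2 / 12 := by
      have h4 := mul_lt_mul_of_pos_left hcoth
        (show (0:ℝ) < N ^ 2 / (4 * a) by positivity)
      refine lt_of_lt_of_le h4 (le_of_eq ?_)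
      field_simp
      ring
    linarith
  exact ⟨main, lt_trans (by positivity) main⟩
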